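/- arXiv:1707.07175 — 3 statements merged into one kernel-verified Lean document; each statement's English description precedes it below -/
import Mathlib

section
/- The positive recurrence condition pFe < pDe for the QBD process Q^(EVFB) is equivalent to Cμ < λ(1 − P_nslb(N,S)), where p is the stationary distribution of A = F + L + D. -/
open Matrix

theorem positive_recurrence_condition_iff (N S : ℕ) (hN : 1 ≤ N) (hS : 1 ≤ S)
    (lam nu mu C : ℝ) (hlam : 0 < lam) (hnu : 0 < nu) (hmu : 0 < mu) (hC : 0 < C)
    (A : Matrix (Fin (N + 1)) (Fin (N + 1)) ℝ)
    (hA : A = Matrix.of (fun i j : Fin (N + 1) =>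
        if (i : ℕ) + 1 = (j : ℕ) then lam
        else if (j : ℕ) + 1 = (i : ℕ) then (min (i : ℕ) S : ℝ) * nu
        else if i = j then
          -((if (i : ℕ) < N then lam else 0) + (min (i : ℕ) S : ℝ) * nu)
        else 0))
    (p : Fin (N + 1) → ℝ) (hpos : ∀ n, 0 ≤ p n)
    (hstat : Matrix.vecMul p A = 0) (hsum : ∑ n, p n = 1) :
    (∑ n, p n * (C * mu)) < (∑ n, p n * ((min (n : ℕ) S : ℝ) * nu)) ↔
      C * mu < lam * (1 - p (Fin.last N)) := by
  -- Row "first moment" of A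
  have hrow : ∀ i : Fin (N + 1), ∑ j, A i j * ((j : ℕ) : ℝ) =
      (if (i : ℕ) < N then lam else 0) - (min (i : ℕ) S : ℝ) * nu := by
    intro i
    have hsplit : ∀ j : Fin (N + 1), A i j * ((j : ℕ) : ℝ) =
        (if (i : ℕ) + 1 = (j : ℕ) then lam * ((j : ℕ) : ℝ) else 0)
        + (if (j : ℕ) + 1 = (i : ℕ) then ((min (i : ℕ) S : ℝ) * nu) * ((j : ℕ) : ℝ) else 0)
        + (if i = j then
            (-((if (i : ℕ) < N then lam else 0) + (min (i : ℕ) S : ℝ) * nu)) * ((j : ℕ) : ℝ)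
           else 0) := by
      intro j
      rw [hA]
      simp only [Matrix.of_apply]
      by_cases h1 : (i : ℕ) + 1 = (j : ℕ)
      · have h2 : ¬ ((j : ℕ) + 1 = (i : ℕ)) := by omega
        have h3 : ¬ i = j := by
          intro h; rw [h] at h1; omega
        simp [h1, h2, h3]
      · by_cases h2 : (j : ℕ) + 1 = (i : ℕ)
        · have h3 : ¬ i = j := by
            intro h; rw [h] at h2; omega
          simp [h1, h2, h3]
        · by_cases h3 : i = j
          · simp [h1, h2, h3]
          · simp [h1, h2, h3]
    rw [Finset.sum_congr rfl (fun j _ => hsplit j)]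
    rw [Finset.sum_add_distrib, Finset.sum_add_distrib]
    have S1 : ∑ j : Fin (N + 1), (if (i : ℕ) + 1 = (j : ℕ) then lam * ((j : ℕ) : ℝ) else 0)
        = (if (i : ℕ) < N then lam else 0) * (((i : ℕ) : ℝ) + 1) := by
      by_cases hi : (i : ℕ) < N
      · rw [Finset.sum_eq_single (⟨(i : ℕ) + 1, by omega⟩ : Fin (N + 1))]
        · simp [hi]
        · intro b _ hb
          rw [if_neg]
          intro h
          exact hb (Fin.ext h.symm)
        · intro h; exact absurd (Finset.mem_univ _) h
      · rw [if_neg hi, zero_mul]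
        apply Finset.sum_eq_zero
        intro j _
        rw [if_neg]
        have := j.isLt
        have := i.isLt
        omega
    have S2 : ∑ j : Fin (N + 1), (if (j : ℕ) + 1 = (i : ℕ) then
          ((min (i : ℕ) S : ℝ) * nu) * ((j : ℕ) : ℝ) else 0)
        = ((min (i : ℕ) S : ℝ) * nu) * (((i : ℕ) : ℝ) - 1) := by
      by_cases hi : 0 < (i : ℕ)
      · rw [Finset.sum_eq_single (⟨(i : ℕ) - 1, by omega⟩ : Fin (N + 1))]
        · rw [if_pos (by simp; omega)]
          congr 1
          simp
          push_cast [Nat.cast_sub hi]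
          ring
        · intro b _ hb
          rw [if_neg]
          intro h
          exact hb (Fin.ext (by simp; omega))
        · intro h; exact absurd (Finset.mem_univ _) h
      · have hi0 : (i : ℕ) = 0 := by omega
        rw [Finset.sum_eq_zero]
        · simp [hi0]
        · intro j _
          rw [if_neg]
          omega
    have S3 : ∑ j : Fin (N + 1), (if i = j then
          (-((if (i : ℕ) < N then lam else 0) + (min (i : ℕ) S : ℝ) * nu)) * ((j : ℕ) : ℝ)
         else 0)
        = (-((if (i : ℕ) < N then lam else 0) + (min (i : ℕ) S : ℝ) * nu)) * ((i : ℕ) : ℝ) := by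
      rw [Finset.sum_ite_eq]
      simp
    rw [S1, S2, S3]
    ring
  -- key balance identity
  have hkey : ∑ n, p n * ((min (n : ℕ) S : ℝ) * nu) = lam * (1 - p (Fin.last N)) := by
    have h0 : ∑ j, (Matrix.vecMul p A) j * ((j : ℕ) : ℝ) = 0 := by
      rw [hstat]; simp
    have h1 : ∑ i, p i * ((if (i : ℕ) < N then lam else 0) - (min (i : ℕ) S : ℝ) * nu) = 0 := by
      calc ∑ i, p i * ((if (i : ℕ) < N then lam else 0) - (min (i : ℕ) S : ℝ) * nu)
          = ∑ i, p i * ∑ j, A i j * ((j : ℕ) : ℝ) := by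
            exact Finset.sum_congr rfl (fun i _ => by rw [hrow i])
        _ = ∑ i, ∑ j, p i * A i j * ((j : ℕ) : ℝ) := by
            exact Finset.sum_congr rfl (fun i _ => by rw [Finset.mul_sum]; ring_nf)
        _ = ∑ j, (∑ i, p i * A i j) * ((j : ℕ) : ℝ) := by
            rw [Finset.sum_comm]
            exact Finset.sum_congr rfl (fun j _ => by rw [Finset.sum_mul])
        _ = ∑ j, (Matrix.vecMul p A) j * ((j : ℕ) : ℝ) := by
            exact Finset.sum_congr rfl (fun j _ => by
              simp [Matrix.vecMul, dotProduct])
        _ = 0 := h0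
    have h2 : ∑ i, p i * (if (i : ℕ) < N then lam else 0) = lam * (1 - p (Fin.last N)) := by
      have hpt : ∀ i : Fin (N + 1), p i * (if (i : ℕ) < N then lam else 0)
          = p i * lam - (if i = Fin.last N then p i * lam else 0) := by
        intro i
        by_cases hi : i = Fin.last N
        · have : ¬ ((i : ℕ) < N) := by rw [hi]; simp
          simp [hi, this]
        · have hv : (i : ℕ) ≠ N := by
            intro h; exact hi (Fin.ext h)
          have : (i : ℕ) < N := by have := i.isLt; omega
          simp [hi, this]
      rw [Finset.sum_congr rfl (fun i _ => hpt i), Finset.sum_sub_distrib,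
        Finset.sum_ite_eq' Finset.univ (Fin.last N) (fun i => p i * lam)]
      simp only [Finset.mem_univ, if_true]
      rw [← Finset.sum_mul, hsum]
      ring
    rw [Finset.sum_congr rfl (fun i (_ : i ∈ Finset.univ) => mul_sub (p i) _ _)] at h1
    rw [Finset.sum_sub_distrib, h2] at h1
    linarith
  have hL : ∑ n, p n * (C * mu) = C * mu := by
    rw [← Finset.sum_mul, hsum, one_mul]
  rw [hL, hkey]
end

section
/- The blocking probability of the M/M/S/N queue is strictly decreasing in S for fixed N: if 1 ≤ S < S' ≤ N then P_nslb(N, S') < P_nslb(N, S). -/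
noncomputable def mmsnP0 (lam nu : ℝ) (N S : ℕ) : ℝ :=
  (∑ n ∈ Finset.range (S + 1), (lam / nu) ^ n / (n.factorial : ℝ)
    + ((lam / nu) ^ S / (S.factorial : ℝ))
      * ∑ n ∈ Finset.Icc (S + 1) N, (lam / nu) ^ (n - S) / (S : ℝ) ^ (n - S))⁻¹

noncomputable def mmsnPnslb (lam nu : ℝ) (N S : ℕ) : ℝ :=
  (lam / nu) ^ N / ((S : ℝ) ^ (N - S) * (S.factorial : ℝ)) * mmsnP0 lam nu N S

noncomputable def coefB (N S n : ℕ) : ℝ :=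
  if n ≤ S then (S : ℝ) ^ (N - S) * (S.factorial : ℝ) / (n.factorial : ℝ)
  else (S : ℝ) ^ (N - n)

noncomputable def bigB (r : ℝ) (N S : ℕ) : ℝ :=
  ∑ n ∈ Finset.range (N + 1), r ^ n * coefB N S n

lemma coefB_nonneg (N S n : ℕ) : 0 ≤ coefB N S n := by
  unfold coefB
  split <;> positivity

lemma coefB_zero (N S : ℕ) : coefB N S 0 = (S : ℝ) ^ (N - S) * (S.factorial : ℝ) := by
  simp [coefB]

lemma bigB_pos {r : ℝ} (hr : 0 < r) {N S : ℕ} (hS : 1 ≤ S) : 0 < bigB r N S := by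
  unfold bigB
  apply Finset.sum_pos'
  · intro i _; exact mul_nonneg (by positivity) (coefB_nonneg N S i)
  · refine ⟨0, Finset.mem_range.mpr (Nat.succ_pos N), ?_⟩
    rw [coefB_zero]
    have hSpos : (0:ℝ) < (S:ℝ) := by exact_mod_cast hS
    have : (0:ℝ) < (S:ℝ) ^ (N - S) := pow_pos hSpos _
    positivity

lemma bigB_eq (lam nu : ℝ) (hlam : 0 < lam) (hnu : 0 < nu) {N S : ℕ} (hS : 1 ≤ S)
    (hSN : S ≤ N) :
    bigB (lam / nu) N S =
      ((S : ℝ) ^ (N - S) * (S.factorial : ℝ)) *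
      (∑ n ∈ Finset.range (S + 1), (lam / nu) ^ n / (n.factorial : ℝ)
        + ((lam / nu) ^ S / (S.factorial : ℝ))
          * ∑ n ∈ Finset.Icc (S + 1) N, (lam / nu) ^ (n - S) / (S : ℝ) ^ (n - S)) := by
  set r := lam / nu with hrdef
  have hr : 0 < r := by positivity
  have hS0 : (S : ℝ) ≠ 0 := by positivity
  have hfac : (S.factorial : ℝ) ≠ 0 := by positivity
  unfold bigB
  rw [Finset.range_eq_Ico, ← Finset.sum_Ico_consecutive _ (Nat.zero_le (S+1))
    (by omega : S + 1 ≤ N + 1)]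
  have h1 : ∑ n ∈ Finset.Ico 0 (S+1), r ^ n * coefB N S n
      = ((S : ℝ) ^ (N - S) * (S.factorial : ℝ)) *
        ∑ n ∈ Finset.range (S + 1), r ^ n / (n.factorial : ℝ) := by
    rw [Finset.mul_sum, ← Finset.range_eq_Ico]
    apply Finset.sum_congr rfl
    intro n hn
    have hnS : n ≤ S := by
      have := Finset.mem_range.mp hn; omega
    rw [coefB, if_pos hnS]
    ring
  have h2 : ∑ n ∈ Finset.Ico (S+1) (N+1), r ^ n * coefB N S n
      = ((S : ℝ) ^ (N - S) * (S.factorial : ℝ)) *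
        ((r ^ S / (S.factorial : ℝ)) *
          ∑ n ∈ Finset.Icc (S + 1) N, r ^ (n - S) / (S : ℝ) ^ (n - S)) := by
    rw [Finset.mul_sum, Finset.mul_sum, ← Finset.Ico_add_one_right_eq_Icc]
    apply Finset.sum_congr rfl
    intro n hn
    have hmem := Finset.mem_Ico.mp hn
    have hSn : S < n := by omega
    have hnN : n ≤ N := by omega
    rw [coefB, if_neg (by omega)]
    have hpow1 : r ^ n = r ^ S * r ^ (n - S) := by
      rw [← pow_add]; congr 1; omega
    have hpow2 : (S:ℝ) ^ (N - S) = (S:ℝ) ^ (N - n) * (S:ℝ) ^ (n - S) := by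
      rw [← pow_add]; congr 1; omega
    rw [hpow1, hpow2]
    field_simp
  rw [h1, h2, mul_add, Finset.range_eq_Ico]

lemma pnslb_eq (lam nu : ℝ) (hlam : 0 < lam) (hnu : 0 < nu) {N S : ℕ} (hS : 1 ≤ S)
    (hSN : S ≤ N) :
    mmsnPnslb lam nu N S = (lam / nu) ^ N / bigB (lam / nu) N S := by
  have hS0 : (0:ℝ) < (S:ℝ) := by exact_mod_cast hS
  have hfac : (0:ℝ) < (S.factorial : ℝ) := by positivity
  rw [mmsnPnslb, mmsnP0, ← div_eq_mul_inv, div_div, ← bigB_eq lam nu hlam hnu hS hSN]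

lemma coefB_le (N S n : ℕ) (hS : 1 ≤ S) (hSN : S + 1 ≤ N) :
    coefB N S n ≤ coefB N (S + 1) n := by
  have hcast : ((S:ℝ)) ≤ ((S:ℝ) + 1) := by linarith
  have hpow : ∀ k : ℕ, (S:ℝ) ^ k ≤ ((S:ℝ) + 1) ^ k := fun k =>
    pow_le_pow_left₀ (by positivity) hcast k
  have hc1 : ((S + 1 : ℕ) : ℝ) = (S:ℝ) + 1 := by push_cast; ring
  unfold coefB
  rcases le_or_gt n S with hn | hn
  · rw [if_pos hn, if_pos (by omega)]
    have hfacpos : (0:ℝ) < (n.factorial : ℝ) := by positivity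
    have hnum : (S:ℝ) ^ (N - S) * (S.factorial : ℝ)
        ≤ ((S+1:ℕ):ℝ) ^ (N - (S+1)) * (((S+1).factorial : ℕ) : ℝ) := by
      have hNS : N - S = (N - (S + 1)) + 1 := by omega
      have hf : (((S+1).factorial : ℕ) : ℝ) = ((S:ℝ) + 1) * (S.factorial : ℝ) := by
        rw [Nat.factorial_succ]; push_cast; ring
      rw [hNS, hc1, hf]
      calc (S:ℝ) ^ (N - (S+1) + 1) * (S.factorial : ℝ)
          ≤ ((S:ℝ)+1) ^ (N - (S+1) + 1) * (S.factorial : ℝ) := by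
            apply mul_le_mul_of_nonneg_right (hpow _) (by positivity)
        _ = ((S:ℝ)+1) ^ (N - (S+1)) * (((S:ℝ)+1) * (S.factorial : ℝ)) := by ring
    gcongr
  · rcases Nat.lt_or_ge (S+1) n with hn2 | hn2
    · rw [if_neg (by omega), if_neg (by omega), hc1]
      exact hpow _
    · have hn3 : n = S + 1 := by omega
      subst hn3
      rw [if_neg (by omega), if_pos le_rfl, hc1]
      have hfacne : (((S+1).factorial : ℕ) : ℝ) ≠ 0 := by positivity
      rw [mul_div_assoc, div_self hfacne, mul_one]
      exact hpow _

lemma coefB_zero_lt (N S : ℕ) (hS : 1 ≤ S) (hSN : S + 1 ≤ N) :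
    coefB N S 0 < coefB N (S + 1) 0 := by
  rw [coefB_zero, coefB_zero]
  have hc1 : ((S + 1 : ℕ) : ℝ) = (S:ℝ) + 1 := by push_cast; ring
  have hNS : N - S = (N - (S + 1)) + 1 := by omega
  have hfs : ((S+1).factorial : ℝ) = ((S:ℝ) + 1) * (S.factorial : ℝ) := by
    rw [Nat.factorial_succ]; push_cast; ring
  rw [hc1, hNS, hfs]
  have hlt : (S:ℝ) ^ (N - (S+1) + 1) < ((S:ℝ) + 1) ^ (N - (S+1) + 1) := by
    apply pow_lt_pow_left₀ (by linarith) (by positivity) (by omega)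
  have hfacpos : (0:ℝ) < (S.factorial : ℝ) := by positivity
  calc (S:ℝ) ^ (N - (S+1) + 1) * (S.factorial : ℝ)
      < ((S:ℝ)+1) ^ (N - (S+1) + 1) * (S.factorial : ℝ) := by
        exact mul_lt_mul_of_pos_right hlt hfacpos
    _ = ((S:ℝ)+1) ^ (N - (S+1)) * (((S:ℝ)+1) * (S.factorial : ℝ)) := by ring

lemma bigB_succ_lt {r : ℝ} (hr : 0 < r) {N S : ℕ} (hS : 1 ≤ S) (hSN : S + 1 ≤ N) :
    bigB r N S < bigB r N (S + 1) := by
  unfold bigB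
  apply Finset.sum_lt_sum
  · intro i _
    exact mul_le_mul_of_nonneg_left (coefB_le N S i hS hSN) (by positivity)
  · refine ⟨0, Finset.mem_range.mpr (Nat.succ_pos N), ?_⟩
    simpa using coefB_zero_lt N S hS hSN

lemma bigB_lt {r : ℝ} (hr : 0 < r) {N S : ℕ} (hS : 1 ≤ S) :
    ∀ S', S < S' → S' ≤ N → bigB r N S < bigB r N S' := by
  intro S'
  induction S' with
  | zero => omega
  | succ k ih =>
    intro hlt hle
    rcases Nat.lt_or_ge S k with h | h
    · exact (ih h (by omega)).trans (bigB_succ_lt hr (by omega) hle)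
    · have : S = k := by omega
      subst this
      exact bigB_succ_lt hr hS hle

theorem blocking_prob_strict_anti_in_S (lam nu : ℝ) (hlam : 0 < lam) (hnu : 0 < nu)
    (N S S' : ℕ) (hS : 1 ≤ S) (hSS' : S < S') (hS'N : S' ≤ N) :
    mmsnPnslb lam nu N S' < mmsnPnslb lam nu N S := by
  have hr : 0 < lam / nu := by positivity
  have hS' : 1 ≤ S' := by omega
  rw [pnslb_eq lam nu hlam hnu hS (by omega), pnslb_eq lam nu hlam hnu hS' hS'N]
  have hB : bigB (lam / nu) N S < bigB (lam / nu) N S' := bigB_lt hr hS S' hSS' hS'N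
  exact div_lt_div_of_pos_left (by positivity) (bigB_pos hr hS) hB
end

section
/- The blocking probability of the M/M/S/N queue is strictly decreasing in N for fixed S: if S ≤ N < N' then P_nslb(N', S) < P_nslb(N, S). -/
open Finset

noncomputable def mmB (r : ℝ) (S : ℕ) : ℝ := ∑ n ∈ range (S + 1), r ^ n / (n.factorial : ℝ)

noncomputable def mmT (x : ℝ) (S N : ℕ) : ℝ := ∑ n ∈ Finset.Icc (S + 1) N, x ^ (n - S)

lemma mmB_pos {r : ℝ} (hr : 0 < r) (S : ℕ) : 0 < mmB r S := by
  apply Finset.sum_pos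
  · intro n _; positivity
  · exact ⟨0, by simp⟩

lemma mmT_nonneg {x : ℝ} (hx : 0 ≤ x) (S N : ℕ) : 0 ≤ mmT x S N := by
  apply Finset.sum_nonneg; intro n _; positivity

lemma key_ineq (r : ℝ) (hr : 0 < r) (S : ℕ) (hS : 1 ≤ S) :
    mmB r S * (r / S) < r ^ S / (S.factorial : ℝ) * (r / S) + mmB r S := by
  have hS0 : (0 : ℝ) < S := by exact_mod_cast hS
  have h1 : (∑ n ∈ range S, r ^ n / (n.factorial : ℝ)) * (r / S)
      = ∑ n ∈ range S, r ^ (n + 1) / ((n.factorial : ℝ) * S) := by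
    rw [Finset.sum_mul]
    refine sum_congr rfl fun n _ => ?_
    have hn : (0 : ℝ) < n.factorial := by positivity
    field_simp
    ring
  have h2 : ∑ n ∈ range S, r ^ (n + 1) / ((n.factorial : ℝ) * S)
      ≤ ∑ n ∈ range S, r ^ (n + 1) / ((n + 1).factorial : ℝ) := by
    refine Finset.sum_le_sum fun n hn => ?_
    have hn' : (n : ℝ) + 1 ≤ S := by
      have := Finset.mem_range.mp hn; exact_mod_cast this
    have hf : (0 : ℝ) < n.factorial := by positivity
    rw [Nat.factorial_succ]
    push_cast
    rw [div_le_div_iff₀ (by positivity) (by positivity)]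
    have hden : ((n : ℝ) + 1) * n.factorial ≤ n.factorial * S := by nlinarith
    exact mul_le_mul_of_nonneg_left hden (by positivity)
  have h3 : ∑ n ∈ range S, r ^ (n + 1) / ((n + 1).factorial : ℝ) = mmB r S - 1 := by
    have := Finset.sum_range_succ' (fun n => r ^ n / (n.factorial : ℝ)) S
    simp only [mmB, this, Nat.factorial_zero, pow_zero]
    push_cast
    ring
  have hB : mmB r S = (∑ n ∈ range S, r ^ n / (n.factorial : ℝ)) + r ^ S / (S.factorial : ℝ) := by
    simp [mmB, Finset.sum_range_succ]
  have hexp : mmB r S * (r / S)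
      = (∑ n ∈ range S, r ^ n / (n.factorial : ℝ)) * (r / S)
        + r ^ S / (S.factorial : ℝ) * (r / S) := by
    rw [hB]; ring
  have hBpos := mmB_pos hr S
  rw [hexp, h1]
  linarith

lemma geom_id (x : ℝ) (S : ℕ) : ∀ N, S ≤ N →
    x * mmT x S N + x = mmT x S N + x ^ (N - S + 1) := by
  intro N hN
  induction N, hN using Nat.le_induction with
  | base =>
    have : mmT x S S = 0 := by simp [mmT]
    simp [this]
  | succ N hN ih =>
    have hT : mmT x S (N + 1) = mmT x S N + x ^ (N + 1 - S) := by
      rw [mmT, Finset.sum_Icc_succ_top (by omega : S + 1 ≤ N + 1)]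
      rfl
    have hsub : N + 1 - S = N - S + 1 := by omega
    rw [hT, hsub]
    calc x * (mmT x S N + x ^ (N - S + 1)) + x
        = (x * mmT x S N + x) + x ^ (N - S + 1) * x := by ring
      _ = mmT x S N + x ^ (N - S + 1) + x ^ (N - S + 1 + 1) := by rw [ih, ← pow_succ]

lemma rep (lam nu : ℝ) (hlam : 0 < lam) (hnu : 0 < nu) (S N : ℕ) (hS : 1 ≤ S) (hSN : S ≤ N) :
    mmsnPnslb lam nu N S =
      (lam / nu) ^ S / (S.factorial : ℝ) * (lam / nu / S) ^ (N - S) /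
        (mmB (lam / nu) S + (lam / nu) ^ S / (S.factorial : ℝ) * mmT (lam / nu / S) S N) := by
  have hS0 : (0 : ℝ) < S := by exact_mod_cast hS
  have hr : (0 : ℝ) < lam / nu := by positivity
  have hsum : ∑ n ∈ Finset.Icc (S + 1) N, (lam / nu) ^ (n - S) / (S : ℝ) ^ (n - S)
      = mmT (lam / nu / S) S N := by
    refine Finset.sum_congr rfl fun n _ => ?_
    simp [div_pow]
  have hpow : (lam / nu) ^ N = (lam / nu) ^ S * (lam / nu) ^ (N - S) := by
    rw [← pow_add, Nat.add_sub_cancel' hSN]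
  unfold mmsnPnslb mmsnP0
  rw [hsum, hpow,
    show (∑ n ∈ Finset.range (S + 1), (lam / nu) ^ n / (n.factorial : ℝ)) = mmB (lam / nu) S
      from rfl, div_pow]
  ring

lemma step_lt (lam nu : ℝ) (hlam : 0 < lam) (hnu : 0 < nu) (S N : ℕ) (hS : 1 ≤ S)
    (hSN : S ≤ N) : mmsnPnslb lam nu (N + 1) S < mmsnPnslb lam nu N S := by
  have hS0 : (0 : ℝ) < S := by exact_mod_cast hS
  have hr : (0 : ℝ) < lam / nu := by positivity
  have hx : (0 : ℝ) < lam / nu / S := by positivity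
  have hT' : mmT (lam / nu / S) S (N + 1) = mmT (lam / nu / S) S N
      + (lam / nu / S) ^ (N - S + 1) := by
    rw [mmT, Finset.sum_Icc_succ_top (by omega : S + 1 ≤ N + 1)]
    have : N + 1 - S = N - S + 1 := by omega
    rw [this]
    rfl
  have hsub : N + 1 - S = N - S + 1 := by omega
  rw [rep lam nu hlam hnu S (N + 1) hS (by omega), rep lam nu hlam hnu S N hS hSN, hsub, hT']
  set r := lam / nu with hrdef
  set x := r / S with hxdef
  set c := r ^ S / (S.factorial : ℝ) with hcdef
  have hc : 0 < c := by rw [hcdef]; positivity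
  have hB : 0 < mmB r S := mmB_pos hr S
  set B := mmB r S
  set T := mmT x S N with hTdef
  have hTpos : 0 ≤ T := mmT_nonneg hx.le S N
  set m := N - S
  have hgeom : x * T + x = T + x ^ (m + 1) := geom_id x S N hSN
  have hxm : 0 < x ^ m := by positivity
  have hxm1 : 0 < x ^ (m + 1) := by positivity
  have hD : 0 < B + c * T := by positivity
  have hD' : 0 < B + c * (T + x ^ (m + 1)) := by positivity
  have hpow : x ^ (m + 1) = x ^ m * x := pow_succ x m
  rw [div_lt_div_iff₀ hD' hD, hpow]
  have hkey : B * x < c * x + B := key_ineq r hr S hS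
  have h1 : c * x ^ m * (B * x) < c * x ^ m * (c * x + B) :=
    mul_lt_mul_of_pos_left hkey (mul_pos hc hxm)
  have e2 : c * (c * (x ^ m * (x * T + x))) = c * (c * (x ^ m * (T + x ^ m * x))) := by
    rw [hgeom, hpow]
  nlinarith [h1, e2]

theorem blocking_prob_strict_anti_in_N (lam nu : ℝ) (hlam : 0 < lam) (hnu : 0 < nu)
    (S N N' : ℕ) (hS : 1 ≤ S) (hSN : S ≤ N) (hNN' : N < N') :
    mmsnPnslb lam nu N' S < mmsnPnslb lam nu N S := by
  have h : ∀ M, N + 1 ≤ M → mmsnPnslb lam nu M S < mmsnPnslb lam nu N S := by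
    intro M hM
    induction M, hM using Nat.le_induction with
    | base => exact step_lt lam nu hlam hnu S N hS hSN
    | succ M hM ih =>
      exact lt_trans (step_lt lam nu hlam hnu S M hS (by omega)) ih
  exact h N' hNN'
end
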